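/- Let b(t) = (1/2π) ∫ p(ω) [sin((ω+E)t/2)/((ω+E)/2)]² dω where p ≥ 0, E ≥ E_gap > 0, ∫ p(ω) dω ≤ 2π M², and the tail satisfies ∫_{|ω| ≥ E_gap/2} p(ω) dω ≤ 2π M² Q^{−1} for some Q > 0. Then b(t) ≤ M² (t² Q^{−1} + 16/E_gap²). -/

import Mathlib

open MeasureTheory

lemma aux_ker_le_sq (a t : ℝ) : (Real.sin (a * t / 2) / (a / 2)) ^ 2 ≤ t ^ 2 := by
  rcases eq_or_ne a 0 with h | h
  · simp [h]
    positivity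
  · have ha2 : a / 2 ≠ 0 := by positivity
    rw [div_pow, div_le_iff₀ (by positivity : (0:ℝ) < (a/2)^2)]
    have := Real.sin_sq_le_sq (x := a * t / 2)
    calc Real.sin (a * t / 2) ^ 2 ≤ (a * t / 2) ^ 2 := Real.sin_sq_le_sq
      _ = t ^ 2 * (a / 2) ^ 2 := by ring

lemma aux_ker_le_gap (a Egap : ℝ) (hgap : 0 < Egap) (ha : Egap / 2 ≤ a) (t : ℝ) :
    (Real.sin (a * t / 2) / (a / 2)) ^ 2 ≤ 16 / Egap ^ 2 := by
  have ha0 : 0 < a := lt_of_lt_of_le (by positivity) ha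
  rw [div_pow]
  have step : Real.sin (a * t / 2) ^ 2 / (a / 2) ^ 2 ≤ 1 / (a / 2) ^ 2 := by
    gcongr
    exact Real.sin_sq_le_one _
  refine step.trans ?_
  rw [div_le_div_iff₀ (by positivity) (by positivity)]
  nlinarith [sq_nonneg (a - Egap / 2)]

/-- Let `b(t) = (1/2π) ∫ p(ω) [sin((ω+E)t/2)/((ω+E)/2)]² dω` with `p ≥ 0`,
`E ≥ E_gap > 0`, total mass `∫ p ≤ 2π M²` and tail
`∫_{|ω| ≥ E_gap/2} p ≤ 2π M²/Q` for some `Q > 0`.  Then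
`b(t) ≤ M² (t²/Q + 16/E_gap²)`. -/
theorem stmt13 (p : ℝ → ℝ) (hp : ∀ ω, 0 ≤ p ω) (hint : Integrable p)
    (E Egap M Q : ℝ) (hgap : 0 < Egap) (hE : Egap ≤ E) (hQ : 0 < Q)
    (t : ℝ)
    (hker : Integrable (fun ω =>
      p ω * (Real.sin ((ω + E) * t / 2) / ((ω + E) / 2)) ^ 2))
    (htot : ∫ ω, p ω ≤ 2 * Real.pi * M ^ 2)
    (htail : ∫ ω in {x : ℝ | Egap / 2 ≤ |x|}, p ω ≤ 2 * Real.pi * M ^ 2 / Q)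
    (b : ℝ → ℝ)
    (hb : b t = (1 / (2 * Real.pi)) *
      ∫ ω, p ω * (Real.sin ((ω + E) * t / 2) / ((ω + E) / 2)) ^ 2) :
    b t ≤ M ^ 2 * (t ^ 2 / Q + 16 / Egap ^ 2) := by
  set K : ℝ → ℝ := fun ω => p ω * (Real.sin ((ω + E) * t / 2) / ((ω + E) / 2)) ^ 2 with hK
  set S : Set ℝ := {x | x < -(Egap / 2)} with hS
  have hSmeas : MeasurableSet S := measurableSet_lt measurable_id measurable_const
  -- split integral
  have hsplit : ∫ ω, K ω = (∫ ω in S, K ω) + ∫ ω in Sᶜ, K ω :=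
    (integral_add_compl hSmeas hker).symm
  -- subset of tail
  have hsub : S ⊆ {x : ℝ | Egap / 2 ≤ |x|} := by
    intro x hx
    simp only [hS, Set.mem_setOf_eq] at hx ⊢
    have : Egap / 2 ≤ -x := by linarith
    exact this.trans (neg_le_abs x)
  -- bound on S
  have h1 : ∫ ω in S, K ω ≤ t ^ 2 * (2 * Real.pi * M ^ 2 / Q) := by
    have step1 : ∫ ω in S, K ω ≤ ∫ ω in S, t ^ 2 * p ω := by
      refine setIntegral_mono_on hker.integrableOn
        ((hint.integrableOn).const_mul _) hSmeas ?_
      intro x _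
      have := aux_ker_le_sq (x + E) t
      have hpx := hp x
      calc K x ≤ p x * t ^ 2 := by
            exact mul_le_mul_of_nonneg_left this hpx
        _ = t ^ 2 * p x := by ring
    have step2 : ∫ ω in S, t ^ 2 * p ω = t ^ 2 * ∫ ω in S, p ω := by
      exact integral_const_mul _ _
    have step3 : ∫ ω in S, p ω ≤ ∫ ω in {x : ℝ | Egap / 2 ≤ |x|}, p ω := by
      apply setIntegral_mono_set hint.integrableOn
        (Filter.Eventually.of_forall hp) (Filter.Eventually.of_forall hsub)
    calc ∫ ω in S, K ω ≤ t ^ 2 * ∫ ω in S, p ω := by rw [← step2]; exact step1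
      _ ≤ t ^ 2 * (2 * Real.pi * M ^ 2 / Q) := by
          apply mul_le_mul_of_nonneg_left (step3.trans htail) (by positivity)
  -- bound on Sᶜ
  have h2 : ∫ ω in Sᶜ, K ω ≤ (16 / Egap ^ 2) * (2 * Real.pi * M ^ 2) := by
    have step1 : ∫ ω in Sᶜ, K ω ≤ ∫ ω in Sᶜ, (16 / Egap ^ 2) * p ω := by
      refine setIntegral_mono_on hker.integrableOn
        ((hint.integrableOn).const_mul _) hSmeas.compl ?_
      intro x hx
      simp only [hS, Set.mem_compl_iff, Set.mem_setOf_eq, not_lt] at hx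
      have hxe : Egap / 2 ≤ x + E := by linarith
      have := aux_ker_le_gap (x + E) Egap hgap hxe t
      have hpx := hp x
      calc K x ≤ p x * (16 / Egap ^ 2) := mul_le_mul_of_nonneg_left this hpx
        _ = (16 / Egap ^ 2) * p x := by ring
    have step2 : ∫ ω in Sᶜ, (16 / Egap ^ 2) * p ω = (16 / Egap ^ 2) * ∫ ω in Sᶜ, p ω :=
      integral_const_mul _ _
    have step3 : ∫ ω in Sᶜ, p ω ≤ ∫ ω, p ω :=
      setIntegral_le_integral hint (Filter.Eventually.of_forall hp)
    calc ∫ ω in Sᶜ, K ω ≤ (16 / Egap ^ 2) * ∫ ω in Sᶜ, p ω := by rw [← step2]; exact step1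
      _ ≤ (16 / Egap ^ 2) * (2 * Real.pi * M ^ 2) := by
          apply mul_le_mul_of_nonneg_left (step3.trans htot) (by positivity)
  have hItot : ∫ ω, K ω ≤ t ^ 2 * (2 * Real.pi * M ^ 2 / Q) +
      (16 / Egap ^ 2) * (2 * Real.pi * M ^ 2) := by
    rw [hsplit]; exact add_le_add h1 h2
  rw [hb]
  have hpi : 0 < Real.pi := Real.pi_pos
  have key : (1 / (2 * Real.pi)) * (t ^ 2 * (2 * Real.pi * M ^ 2 / Q) +
      (16 / Egap ^ 2) * (2 * Real.pi * M ^ 2)) = M ^ 2 * (t ^ 2 / Q + 16 / Egap ^ 2) := by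
    field_simp
  calc (1 / (2 * Real.pi)) * ∫ ω, K ω
      ≤ (1 / (2 * Real.pi)) * (t ^ 2 * (2 * Real.pi * M ^ 2 / Q) +
        (16 / Egap ^ 2) * (2 * Real.pi * M ^ 2)) :=
        mul_le_mul_of_nonneg_left hItot (by positivity)
    _ = M ^ 2 * (t ^ 2 / Q + 16 / Egap ^ 2) := key
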